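/- arXiv:2507.07777 — 2 statements merged into one kernel-verified Lean document; each statement's English description precedes it below -/
import Mathlib

section
/- Let a ∈ 𝒜. Then a has a generalized w-weighted core-EP inverse if and only if a has a w-weighted g-Drazin inverse a^{d,w} and a^{d,w} has a (1,3,w)-inverse. Moreover, if u is any (1,3,w)-inverse of a^{d,w}, then a^{⊛d,w} = (a^{d,w}·w)²·u. -/
open Filter

/-- `y` is quasinilpotent: `‖yⁿ‖^{1/n} → 0`. -/
def IsQuasinilpotent {R : Type*} [NormedRing R] (y : R) : Prop :=
  Filter.Tendsto (fun n : ℕ => ‖y ^ n‖ ^ (1 / (n : ℝ))) Filter.atTop (nhds 0)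

/-- `y` is `w`-quasinilpotent: `‖(yw)ⁿ‖^{1/n} → 0`. -/
def IsWQuasinilpotent {R : Type*} [NormedRing R] (w y : R) : Prop :=
  Filter.Tendsto (fun n : ℕ => ‖(y * w) ^ n‖ ^ (1 / (n : ℝ))) Filter.atTop (nhds 0)

/-- `x` is a `w`-weighted core inverse of `a`. -/
def IsWCoreInv {R : Type*} [NormedRing R] [StarRing R] (w a x : R) : Prop :=
  a * (w * x) ^ 2 = x ∧ star (w * a * w * x) = w * a * w * x ∧ x * w * (a * w) ^ 2 = a * w

/-- `x` is a generalized `w`-weighted core-EP inverse of `a`. -/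
def IsWCoreEPInv {R : Type*} [NormedRing R] [StarRing R] (w a x : R) : Prop :=
  a * (w * x) ^ 2 = x ∧ star (w * a * w * x) = w * a * w * x ∧
    Filter.Tendsto (fun n : ℕ => ‖(a * w) ^ n - x * w * (a * w) ^ (n + 1)‖ ^ (1 / (n : ℝ)))
      Filter.atTop (nhds 0)

/-- `g` is a group inverse of `b`. -/
def IsGroupInv {R : Type*} [Ring R] (b g : R) : Prop :=
  b * g * b = b ∧ g * b * g = g ∧ b * g = g * b

/-- `u` is a (1,3)-inverse of `b`. -/
def Is13Inv {R : Type*} [Ring R] [StarRing R] (b u : R) : Prop :=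
  b * u * b = b ∧ star (b * u) = b * u

/-- `x` is a `(b,c)`-inverse of `a`. -/
def IsBCInv {R : Type*} [Ring R] (b c a x : R) : Prop :=
  x * a * b = b ∧ c * a * x = c ∧ (∃ s, x = b * s * x) ∧ (∃ t, x = x * t * c)

/-- `x` is a g-Drazin inverse of `b`. -/
def IsGDrazinInv {R : Type*} [NormedRing R] (b x : R) : Prop :=
  b * x = x * b ∧ x * b * x = x ∧ IsQuasinilpotent (b - b ^ 2 * x)

/-- `x` is a `w`-weighted g-Drazin inverse of `a`. -/
def IsWGDrazinInv {R : Type*} [NormedRing R] (w a x : R) : Prop :=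
  a * w * x = x * w * a ∧ x * w * a * w * x = x ∧
    IsWQuasinilpotent w (a - a * w * x * w * a)

/-- `x` is a core inverse of `a`. -/
def IsCoreInv {R : Type*} [Ring R] [StarRing R] (a x : R) : Prop :=
  a * x ^ 2 = x ∧ star (a * x) = a * x ∧ x * a ^ 2 = a

/-- `x` is a generalized core-EP inverse of `a`. -/
def IsCoreEPInv {R : Type*} [NormedRing R] [StarRing R] (a x : R) : Prop :=
  a * x ^ 2 = x ∧ star (a * x) = a * x ∧
    Filter.Tendsto (fun n : ℕ => ‖a ^ n - x * a ^ (n + 1)‖ ^ (1 / (n : ℝ)))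
      Filter.atTop (nhds 0)

/-- `x` is a pseudo core (core-EP) inverse of `a`. -/
def IsPseudoCoreInv {R : Type*} [Ring R] [StarRing R] (a x : R) : Prop :=
  a * x ^ 2 = x ∧ star (a * x) = a * x ∧ ∃ k : ℕ, 0 < k ∧ x * a ^ (k + 1) = a ^ k

/-- `u` is a `(1,3,w)`-inverse of `b`. -/
def Is13wInv {R : Type*} [Ring R] [StarRing R] (w b u : R) : Prop :=
  b = b * w * u * w * b ∧ star (w * b * w * u) = w * b * w * u

variable {A : Type*} [NormedRing A] [NormedAlgebra ℂ A] [StarRing A] [StarModule ℂ A]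
  [CompleteSpace A]

namespace WCEP


/-- `u` is negligible: eventually dominated by every geometric sequence. -/
def NegligR (u : ℕ → ℝ) : Prop := ∀ ε > 0, ∀ᶠ n in atTop, u n ≤ ε ^ n

theorem negligR_of_tendsto {u : ℕ → ℝ} (h0 : ∀ n, 0 ≤ u n)
    (h : Tendsto (fun n : ℕ => u n ^ (1 / (n : ℝ))) atTop (nhds 0)) : NegligR u := by
  intro ε hε
  filter_upwards [h.eventually_lt_const hε, eventually_ge_atTop 1] with n hn hn1
  have hn0 : (n : ℝ) ≠ 0 := by
    simpa using Nat.one_le_iff_ne_zero.mp hn1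
  have key : u n = (u n ^ (1 / (n : ℝ))) ^ (n : ℝ) := by
    rw [← Real.rpow_mul (h0 n), one_div_mul_cancel hn0, Real.rpow_one]
  calc u n = (u n ^ (1 / (n : ℝ))) ^ (n : ℝ) := key
    _ ≤ ε ^ (n : ℝ) :=
      Real.rpow_le_rpow (Real.rpow_nonneg (h0 n) _) hn.le (Nat.cast_nonneg n)
    _ = ε ^ n := Real.rpow_natCast ε n

theorem negligR_tendsto {u : ℕ → ℝ} (h0 : ∀ n, 0 ≤ u n) (h : NegligR u) :
    Tendsto (fun n : ℕ => u n ^ (1 / (n : ℝ))) atTop (nhds 0) := by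
  rw [Metric.tendsto_atTop]
  intro ε hε
  have h2 := h (ε / 2) (by positivity)
  rw [eventually_atTop] at h2
  obtain ⟨N, hN⟩ := h2
  refine ⟨max N 1, fun n hn => ?_⟩
  have hn1 : 1 ≤ n := le_trans (le_max_right N 1) hn
  have hnN : N ≤ n := le_trans (le_max_left N 1) hn
  have hn0 : (n : ℝ) ≠ 0 := by simpa using Nat.one_le_iff_ne_zero.mp hn1
  have hb : u n ^ (1 / (n : ℝ)) ≤ ε / 2 := by
    have h1 : u n ^ (1 / (n : ℝ)) ≤ ((ε / 2) ^ n) ^ (1 / (n : ℝ)) :=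
      Real.rpow_le_rpow (h0 n) (hN n hnN) (by positivity)
    have h2 : ((ε / 2 : ℝ) ^ n) ^ (1 / (n : ℝ)) = ε / 2 := by
      rw [← Real.rpow_natCast (ε / 2) n, ← Real.rpow_mul (by positivity)]
      rw [mul_one_div, div_self hn0, Real.rpow_one]
    rw [h2] at h1; exact h1
  rw [Real.dist_eq, sub_zero, abs_of_nonneg (Real.rpow_nonneg (h0 n) _)]
  linarith

theorem NegligR.mono {u v : ℕ → ℝ} (h : NegligR u)
    (hv : ∀ᶠ n in atTop, v n ≤ u n) : NegligR v := by
  intro ε hε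
  filter_upwards [hv, h ε hε] with n h1 h2 using h1.trans h2

theorem NegligR.const_shift {u : ℕ → ℝ} (h : NegligR u) {C : ℝ} (hC : 0 ≤ C) (j : ℕ) :
    NegligR (fun n => C * u (n - j)) := by
  intro ε hε
  have h1 := h (ε / 2) (by positivity)
  have ht : Tendsto (fun m : ℕ => C * (1 / 2 : ℝ) ^ m) atTop (nhds 0) := by
    simpa using (tendsto_pow_atTop_nhds_zero_of_lt_one (r := (1/2:ℝ)) (by norm_num) (by norm_num)).const_mul C
  have h2 : ∀ᶠ m : ℕ in atTop, C * (1 / 2 : ℝ) ^ m < ε ^ j :=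
    ht.eventually_lt_const (by positivity)
  have hsub : Tendsto (fun n : ℕ => n - j) atTop atTop := tendsto_sub_atTop_nat j
  filter_upwards [hsub.eventually h1, hsub.eventually h2, eventually_ge_atTop j]
    with n e1 e2 hnj
  have key : ε ^ n = ε ^ j * ε ^ (n - j) := by
    rw [← pow_add, Nat.add_sub_cancel' hnj]
  calc C * u (n - j) ≤ C * (ε / 2) ^ (n - j) := by
        have := mul_le_mul_of_nonneg_left e1 hC; simpa using this
    _ = (C * (1 / 2) ^ (n - j)) * ε ^ (n - j) := by
        rw [div_eq_mul_one_div, mul_comm ε (1/2), mul_pow]; ring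
    _ ≤ ε ^ j * ε ^ (n - j) :=
        mul_le_mul_of_nonneg_right e2.le (by positivity)
    _ = ε ^ n := key.symm

theorem NegligR.shift_up {u : ℕ → ℝ} (h : NegligR u) {C : ℝ} (hC : 0 ≤ C) (j : ℕ) :
    NegligR (fun n => C * u (n + j)) := by
  intro ε hε
  have h1 := h (ε / 2) (by positivity)
  have ht : Tendsto (fun m : ℕ => (C * (ε / 2) ^ j) * (1 / 2 : ℝ) ^ m) atTop (nhds 0) := by
    simpa using (tendsto_pow_atTop_nhds_zero_of_lt_one (r := (1/2:ℝ)) (by norm_num) (by norm_num)).const_mul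
      (C * (ε / 2) ^ j)
  have h2 : ∀ᶠ m : ℕ in atTop, (C * (ε / 2) ^ j) * (1 / 2 : ℝ) ^ m < 1 :=
    ht.eventually_lt_const (by norm_num)
  have hadd : Tendsto (fun n : ℕ => n + j) atTop atTop := tendsto_add_atTop_nat j
  filter_upwards [hadd.eventually h1, h2] with n e1 e2
  calc C * u (n + j) ≤ C * (ε / 2) ^ (n + j) := mul_le_mul_of_nonneg_left e1 hC
    _ = ((C * (ε / 2) ^ j) * (1 / 2) ^ n) * ε ^ n := by
        rw [pow_add, div_eq_mul_one_div, mul_comm ε (1/2), mul_pow ((1:ℝ)/2) ε]; ring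
    _ ≤ 1 * ε ^ n := mul_le_mul_of_nonneg_right e2.le (by positivity)
    _ = ε ^ n := one_mul _

theorem NegligR.add {u v : ℕ → ℝ} (hu : NegligR u) (hv : NegligR v) :
    NegligR (fun n => u n + v n) := by
  intro ε hε
  filter_upwards [hu (ε / 2) (by positivity), hv (ε / 2) (by positivity),
    eventually_ge_atTop 1] with n h1 h2 hn1
  have key : (ε / 2 : ℝ) ^ n = ε ^ n * (1 / 2) ^ n := by
    rw [div_eq_mul_one_div, mul_pow]
  have h3 : ((1 : ℝ) / 2) ^ n ≤ 1 / 2 := by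
    calc ((1:ℝ)/2) ^ n ≤ (1/2 : ℝ) ^ 1 := pow_le_pow_of_le_one (by norm_num) (by norm_num) hn1
      _ = 1 / 2 := pow_one _
  have h4 : (0:ℝ) ≤ ε ^ n := by positivity
  nlinarith [h1, h2]

/-- limit trick: an element whose norm is dominated by `C * u (k+n) * M^n` for all `n`
vanishes, provided `u` is negligible. -/
theorem eq_zero_of_negligR {E : Type*} [NormedAddCommGroup E] {u : ℕ → ℝ} (h : NegligR u)
    (t : E) (C M : ℝ) (hC : 0 ≤ C) (hM : 0 ≤ M) (k : ℕ)
    (hb : ∀ n : ℕ, ‖t‖ ≤ C * u (k + n) * M ^ n) : t = 0 := by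
  set ε : ℝ := min 1 (1 / (2 * (M + 1))) with hεdef
  have hε : 0 < ε := by
    apply lt_min one_pos; positivity
  have hε1 : ε ≤ 1 := min_le_left _ _
  have hεM : ε * M ≤ 1 / 2 := by
    have h1 : ε ≤ 1 / (2 * (M + 1)) := min_le_right _ _
    have h2 : ε * M ≤ (1 / (2 * (M + 1))) * M := mul_le_mul_of_nonneg_right h1 hM
    have h3 : (1 / (2 * (M + 1))) * M ≤ 1 / 2 := by
      rw [div_mul_eq_mul_div, div_le_div_iff₀ (by positivity) (by norm_num)]
      nlinarith
    linarith
  have hev := h ε hε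
  rw [eventually_atTop] at hev
  obtain ⟨N, hN⟩ := hev
  have key : ∀ᶠ n : ℕ in atTop, ‖t‖ ≤ C * (1 / 2 : ℝ) ^ n := by
    filter_upwards [eventually_ge_atTop N] with n hn
    have h1 : u (k + n) ≤ ε ^ (k + n) := hN _ (le_trans hn (Nat.le_add_left n k))
    have h2 : ε ^ (k + n) ≤ ε ^ n := by
      rw [pow_add]
      have : ε ^ k ≤ 1 := pow_le_one₀ hε.le hε1
      nlinarith [pow_nonneg hε.le n, pow_nonneg hε.le k]
    calc ‖t‖ ≤ C * u (k + n) * M ^ n := hb n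
      _ ≤ C * ε ^ n * M ^ n := by
          have := mul_le_mul_of_nonneg_left (h1.trans h2) hC
          exact mul_le_mul_of_nonneg_right this (pow_nonneg hM n)
      _ = C * (ε * M) ^ n := by rw [mul_pow, mul_assoc]
      _ ≤ C * (1 / 2) ^ n := by
          have := pow_le_pow_left₀ (by positivity) hεM n
          exact mul_le_mul_of_nonneg_left this hC
  have ht : Tendsto (fun n : ℕ => C * (1 / 2 : ℝ) ^ n) atTop (nhds 0) := by
    simpa using (tendsto_pow_atTop_nhds_zero_of_lt_one (r := (1/2:ℝ)) (by norm_num) (by norm_num)).const_mul C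
  have : ‖t‖ ≤ 0 := ge_of_tendsto ht key
  simpa using le_antisymm this (norm_nonneg t)

theorem aux_pow_swap {R : Type*} [Monoid R] (u v : R) (n : ℕ) :
    v * (u * v) ^ n = (v * u) ^ n * v := by
  induction n with
  | zero => simp
  | succ n ih =>
    rw [pow_succ, ← mul_assoc, ih, pow_succ]
    simp only [mul_assoc]

theorem aux_pow {R : Type*} [Monoid R] (u v : R) (n : ℕ) :
    (u * v) ^ (n + 1) = u * ((v * u) ^ n * v) := by
  rw [pow_succ', mul_assoc, aux_pow_swap]

variable {A : Type*} [NormedRing A] [CompleteSpace A]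

theorem summable_aux (z g m : A) (hm : NegligR (fun n => ‖m ^ n‖)) (j i : ℕ) :
    Summable (fun k => z ^ (k + j + 1) * (g * m ^ (k + i))) := by
  set ε : ℝ := min 1 (1 / (2 * (‖z‖ + 1))) with hεdef
  have hε : 0 < ε := lt_min one_pos (by positivity)
  have hε1 : ε ≤ 1 := min_le_left _ _
  have hεz : (‖z‖ + 1) * ε ≤ 1 / 2 := by
    have h1 : ε ≤ 1 / (2 * (‖z‖ + 1)) := min_le_right _ _
    have hz0 : (0:ℝ) < ‖z‖ + 1 := by positivity
    have h2 : (‖z‖ + 1) * ε ≤ (‖z‖ + 1) * (1 / (2 * (‖z‖ + 1))) :=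
      mul_le_mul_of_nonneg_left h1 hz0.le
    have h3 : (‖z‖ + 1) * (1 / (2 * (‖z‖ + 1))) = 1 / 2 := by field_simp
    linarith
  have hev := hm ε hε
  rw [eventually_atTop] at hev
  obtain ⟨N, hN⟩ := hev
  apply Summable.of_norm_bounded_eventually
    (g := fun k => ((‖z‖ + 1) ^ (j + 1) * ‖g‖) * (1 / 2 : ℝ) ^ k)
    ((summable_geometric_of_lt_one (by norm_num) (by norm_num)).mul_left _)
  rw [Nat.cofinite_eq_atTop]
  filter_upwards [eventually_ge_atTop N] with k hk
  have h1 : ‖m ^ (k + i)‖ ≤ ε ^ (k + i) := hN _ (le_trans hk (Nat.le_add_right k i))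
  have hb1 : ‖z ^ (k + j + 1) * (g * m ^ (k + i))‖ ≤ ‖z‖ ^ (k + j + 1) * (‖g‖ * ε ^ (k + i)) := by
    calc ‖z ^ (k + j + 1) * (g * m ^ (k + i))‖
        ≤ ‖z ^ (k + j + 1)‖ * ‖g * m ^ (k + i)‖ := norm_mul_le _ _
      _ ≤ ‖z ^ (k + j + 1)‖ * (‖g‖ * ‖m ^ (k + i)‖) :=
          mul_le_mul_of_nonneg_left (norm_mul_le _ _) (norm_nonneg _)
      _ ≤ ‖z‖ ^ (k + j + 1) * (‖g‖ * ε ^ (k + i)) := by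
          apply mul_le_mul (norm_pow_le' z (by omega))
            (mul_le_mul_of_nonneg_left h1 (norm_nonneg g)) (by positivity) (by positivity)
  refine hb1.trans ?_
  have l1 : ‖z‖ ^ (k + j + 1) ≤ (‖z‖ + 1) ^ (k + j + 1) :=
    pow_le_pow_left₀ (norm_nonneg z) (by linarith) _
  have l2 : ε ^ (k + i) ≤ ε ^ k := pow_le_pow_of_le_one hε.le hε1 (Nat.le_add_right k i)
  have l3 : ((‖z‖ + 1) : ℝ) ^ (k + j + 1) = (‖z‖ + 1) ^ (j + 1) * (‖z‖ + 1) ^ k := by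
    rw [← pow_add]; congr 1; omega
  have l5 : ((‖z‖ + 1) * ε) ^ k ≤ (1 / 2 : ℝ) ^ k := pow_le_pow_left₀ (by positivity) hεz k
  calc ‖z‖ ^ (k + j + 1) * (‖g‖ * ε ^ (k + i))
      ≤ (‖z‖ + 1) ^ (k + j + 1) * (‖g‖ * ε ^ (k + i)) :=
        mul_le_mul_of_nonneg_right l1 (by positivity)
    _ ≤ (‖z‖ + 1) ^ (k + j + 1) * (‖g‖ * ε ^ k) :=
        mul_le_mul_of_nonneg_left (mul_le_mul_of_nonneg_left l2 (norm_nonneg g)) (by positivity)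
    _ = ((‖z‖ + 1) ^ (j + 1) * ‖g‖) * ((‖z‖ + 1) * ε) ^ k := by
        rw [l3, mul_pow]; ring
    _ ≤ ((‖z‖ + 1) ^ (j + 1) * ‖g‖) * (1 / 2) ^ k :=
        mul_le_mul_of_nonneg_left l5 (by positivity)



theorem core_construction (c z : A) (h1 : c * (z * z) = z)
    (hq : NegligR (fun n => ‖c ^ n - z * c ^ (n + 1)‖)) :
    ∃ f : A, c * f = f * c ∧ f * (c * f) = f ∧
      NegligR (fun n => ‖(c - c * (c * f)) ^ n‖) ∧
      f * (c * (c * z)) = c * z ∧ (c * z) * f = f := by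
  have U0 : ∀ n : ℕ, c * z ^ (n + 2) = z ^ (n + 1) := by
    intro n
    have e : z ^ (n + 2) = z * (z * z ^ n) := by rw [pow_succ', pow_succ']
    rw [e, ← mul_assoc z z, ← mul_assoc, h1, ← pow_succ']
  have U1 : ∀ n : ℕ, c ^ n * z ^ (n + 1) = z := by
    intro n
    induction n with
    | zero => simp
    | succ n ih => rw [pow_succ, mul_assoc, U0 n, ih]
  have U2 : ∀ k : ℕ, (c ^ k - z * c ^ (k + 1)) * z = 0 := by
    intro k
    apply eq_zero_of_negligR hq _ (‖z‖ + 1) (‖z‖ + 1) (by positivity) (by positivity) k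
    intro n
    have A1 : c ^ (k + n) * z ^ (n + 1) = c ^ k * z := by
      rw [pow_add, mul_assoc, U1 n]
    have A2 : c ^ (k + n + 1) * z ^ (n + 1) = c ^ (k + 1) * z := by
      rw [show k + n + 1 = (k + 1) + n from by omega, pow_add, mul_assoc, U1 n]
    have id1 : (c ^ k - z * c ^ (k + 1)) * z
        = (c ^ (k + n) - z * c ^ (k + n + 1)) * z ^ (n + 1) := by
      rw [sub_mul, sub_mul, mul_assoc, mul_assoc, A1, A2]
    rw [id1]
    calc ‖(c ^ (k + n) - z * c ^ (k + n + 1)) * z ^ (n + 1)‖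
        ≤ ‖c ^ (k + n) - z * c ^ (k + n + 1)‖ * ‖z ^ (n + 1)‖ := norm_mul_le _ _
      _ ≤ ‖c ^ (k + n) - z * c ^ (k + n + 1)‖ * (‖z‖ + 1) ^ (n + 1) := by
          apply mul_le_mul_of_nonneg_left _ (norm_nonneg _)
          exact le_trans (norm_pow_le' z (by omega))
            (pow_le_pow_left₀ (norm_nonneg z) (by linarith) _)
      _ = (‖z‖ + 1) * ‖c ^ (k + n) - z * c ^ (k + n + 1)‖ * (‖z‖ + 1) ^ n := by
          rw [pow_succ]; ring
  have e1 : z * (c * z) = z := by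
    have h := U2 0
    simp only [pow_zero, zero_add, pow_one, sub_mul, one_mul] at h
    rw [sub_eq_zero] at h
    rw [mul_assoc] at h
    exact h.symm
  have e6 : z * (c * (c * z)) = c * z := by
    have h := U2 1
    simp only [pow_one, sub_mul] at h
    rw [sub_eq_zero] at h
    rw [pow_two] at h
    simp only [mul_assoc] at h
    exact h.symm
  obtain ⟨m, hm⟩ : ∃ m : A, m = c - c * (z * c) := ⟨_, rfl⟩
  have e7 : m * z = 0 := by
    rw [hm]; simp only [sub_mul, mul_assoc, e1, sub_self]
  have e8 : m * (c * z) = 0 := by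
    rw [hm]; simp only [sub_mul, mul_assoc, e6, sub_self]
  have e9 : ∀ k : ℕ, m ^ (k + 1) = c * (c ^ k - z * c ^ (k + 1)) := by
    intro k
    induction k with
    | zero =>
      rw [pow_one, hm]
      simp only [pow_zero, zero_add, pow_one, mul_sub, mul_one]
    | succ k ih =>
      have step1 : (c ^ k - z * c ^ (k + 1)) * c = c ^ (k + 1) - z * c ^ (k + 2) := by
        rw [sub_mul, mul_assoc, ← pow_succ, ← pow_succ]
      have step2 : (c ^ k - z * c ^ (k + 1)) * (c * z) = 0 := by
        rw [← mul_assoc, step1]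
        exact U2 (k + 1)
      have qm : (c ^ k - z * c ^ (k + 1)) * m = c ^ (k + 1) - z * c ^ (k + 2) := by
        rw [hm, mul_sub, step1, ← mul_assoc c z c, ← mul_assoc, step2, zero_mul, sub_zero]
      rw [pow_succ, ih, mul_assoc, qm]
  have e9n : NegligR (fun n => ‖m ^ n‖) := by
    apply NegligR.mono (hq.const_shift (norm_nonneg c) 1)
    filter_upwards [eventually_ge_atTop 1] with n hn
    obtain ⟨k, rfl⟩ : ∃ k, n = k + 1 := ⟨n - 1, by omega⟩
    simp only [Nat.add_sub_cancel]
    rw [e9 k]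
    exact norm_mul_le _ _
  obtain ⟨g, hg⟩ : ∃ g : A, g = c - c * (c * z) := ⟨_, rfl⟩
  have hXsum : Summable (fun k => z ^ (k + 2) * (g * m ^ k)) := summable_aux z g m e9n 1 0
  have hSsum : Summable (fun k => z ^ (k + 1) * (g * m ^ k)) := summable_aux z g m e9n 0 0
  have hS'sum : Summable (fun k => z ^ (k + 2) * (g * m ^ (k + 1))) := summable_aux z g m e9n 1 1
  have hWsum : Summable (fun k => z ^ (k + 1) * (g * m ^ (k + 1))) := summable_aux z g m e9n 0 1
  obtain ⟨X, hX⟩ : ∃ X : A, X = ∑' k : ℕ, z ^ (k + 2) * (g * m ^ k) := ⟨_, rfl⟩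
  obtain ⟨W, hW⟩ : ∃ W : A, W = ∑' k : ℕ, z ^ (k + 1) * (g * m ^ (k + 1)) := ⟨_, rfl⟩
  -- termwise facts
  have A2b : ∀ k : ℕ, g * (m ^ k * (c * z)) = 0 := by
    intro k
    cases k with
    | zero =>
      simp only [pow_zero, one_mul]
      rw [hg]; simp only [sub_mul, mul_assoc, e1, sub_self]
    | succ k =>
      rw [pow_succ, mul_assoc, e8, mul_zero, mul_zero]
  -- tsum facts
  have B1 : c * X = ∑' k : ℕ, z ^ (k + 1) * (g * m ^ k) := by
    rw [hX, ← Summable.tsum_mul_left c hXsum]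
    exact tsum_congr fun k => by rw [← mul_assoc, U0 k]
  have B2 : X * c = ∑' k : ℕ, z ^ (k + 2) * (g * m ^ (k + 1)) := by
    rw [hX, ← Summable.tsum_mul_right c hXsum]
    apply tsum_congr
    intro k
    have hmc : m ^ k * c = m ^ (k + 1) + m ^ k * (c * (z * c)) := by
      have hcm : m + c * (z * c) = c := by rw [hm]; exact sub_add_cancel c _
      calc m ^ k * c = m ^ k * (m + c * (z * c)) := by rw [hcm]
        _ = m ^ (k + 1) + m ^ k * (c * (z * c)) := by rw [mul_add, ← pow_succ]
    have hzero : g * (m ^ k * (c * (z * c))) = 0 := by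
      rw [← mul_assoc c z c, ← mul_assoc (m ^ k), ← mul_assoc g, A2b k, zero_mul]
    calc (z ^ (k + 2) * (g * m ^ k)) * c = z ^ (k + 2) * (g * (m ^ k * c)) := by
          simp only [mul_assoc]
      _ = z ^ (k + 2) * (g * m ^ (k + 1) + g * (m ^ k * (c * (z * c)))) := by
          rw [hmc, mul_add]
      _ = z ^ (k + 2) * (g * m ^ (k + 1)) := by rw [hzero, add_zero]
  have B5 : z * (∑' k : ℕ, z ^ (k + 1) * (g * m ^ k)) = X := by
    rw [hX, ← Summable.tsum_mul_left z hSsum]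
    exact tsum_congr fun k => by rw [← mul_assoc, ← pow_succ']
  have B6 : m * X = 0 := by
    rw [hX, ← Summable.tsum_mul_left m hXsum]
    refine (tsum_congr fun k => ?_).trans tsum_zero
    rw [← mul_assoc, pow_succ' z, ← mul_assoc m z, e7, zero_mul, zero_mul]
  have B6' : ∀ k : ℕ, m ^ (k + 1) * X = 0 := fun k => by
    rw [pow_succ, mul_assoc, B6, mul_zero]
  have B7 : X * (c * z) = 0 := by
    rw [hX, ← Summable.tsum_mul_right (c*z) hXsum]
    refine (tsum_congr fun k => ?_).trans tsum_zero
    rw [mul_assoc, mul_assoc, A2b k, mul_zero]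
  have B8 : (∑' k : ℕ, z ^ (k + 2) * (g * m ^ (k + 1))) * X = 0 := by
    rw [← Summable.tsum_mul_right X hS'sum]
    refine (tsum_congr fun k => ?_).trans tsum_zero
    rw [mul_assoc, mul_assoc, B6' k, mul_zero, mul_zero]
  obtain ⟨f, hf⟩ : ∃ f : A, f = z + X := ⟨_, rfl⟩
  have s0 : z * g = z * c - c * z := by
    rw [hg, mul_sub]
    rw [e6]
  have B4 : c * f = f * c := by
    rw [hf, mul_add, add_mul, B1, B2]
    rw [Summable.tsum_eq_zero_add hSsum]
    simp only [zero_add, pow_one, pow_zero, mul_one]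
    -- c*z + (z*g + ∑' s(k+1)) = z*c + ∑' s(k+1)
    rw [s0]
    abel
  have P3 : z * (c * X) = X := by rw [B1]; exact B5
  have P4 : X * (c * X) = 0 := by rw [← mul_assoc, B2]; exact B8
  have B9 : f * (c * f) = f := by
    rw [hf, mul_add c z X, add_mul, mul_add, mul_add, e1, P3, B7, P4]
    simp
  have B10 : c * (∑' k : ℕ, z ^ (k + 1) * (g * m ^ k)) = (c * z) * g + W := by
    rw [← Summable.tsum_mul_left c hSsum]
    rw [Summable.tsum_eq_zero_add (hSsum.mul_left c)]
    congr 1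
    · simp [mul_assoc]
    · rw [hW]; exact tsum_congr fun k => by rw [← mul_assoc, U0 k]
  have B11 : c - c * (c * f) = m - W := by
    rw [hf, mul_add c z X, mul_add, B1, B10]
    have pg : (c * z) * g = c * (z * c) - c * (c * z) := by
      rw [hg, mul_sub]
      rw [mul_assoc c z c]
      rw [mul_assoc c z]
      rw [e6]
    rw [pg, hm]
    abel
  have mW : m * W = 0 := by
    rw [hW, ← Summable.tsum_mul_left m hWsum]
    refine (tsum_congr fun k => ?_).trans tsum_zero
    rw [← mul_assoc, pow_succ' z, ← mul_assoc m z, e7, zero_mul, zero_mul]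
  have mW' : ∀ k : ℕ, m ^ (k + 1) * W = 0 := fun k => by
    rw [pow_succ, mul_assoc, mW, mul_zero]
  have WW : W * W = 0 := by
    have h0 : ∀ k : ℕ, (z ^ (k + 1) * (g * m ^ (k + 1))) * W = 0 := fun k => by
      rw [mul_assoc, mul_assoc, mW' k, mul_zero, mul_zero]
    calc W * W = (∑' k : ℕ, z ^ (k + 1) * (g * m ^ (k + 1))) * W := by rw [← hW]
      _ = ∑' k : ℕ, (z ^ (k + 1) * (g * m ^ (k + 1))) * W :=
          (Summable.tsum_mul_right W hWsum).symm
      _ = 0 := (tsum_congr h0).trans tsum_zero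
  have B13 : ∀ n : ℕ, (m - W) ^ (n + 1) = m ^ (n + 1) - W * m ^ n := by
    intro n
    induction n with
    | zero => simp
    | succ n ih =>
      rw [pow_succ, ih]
      rw [sub_mul, mul_sub, mul_sub]
      rw [← pow_succ, mW' n, mul_assoc W (m ^ n) m, ← pow_succ]
      have hWmW : W * (m ^ n * W) = 0 := by
        cases n with
        | zero => rw [pow_zero, one_mul, WW]
        | succ n =>
          rw [mW' n, mul_zero]
      rw [← mul_assoc W (m ^ n) W] at hWmW
      rw [hWmW, sub_zero, sub_zero]
  have B14 : NegligR (fun n => ‖(m - W) ^ n‖) := by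
    have h1 : NegligR (fun n => (1:ℝ) * ‖m ^ (n - 0)‖) := e9n.const_shift zero_le_one 0
    have h2 : NegligR (fun n => ‖W‖ * ‖m ^ (n - 1)‖) := e9n.const_shift (norm_nonneg W) 1
    apply (h1.add h2).mono
    filter_upwards [eventually_ge_atTop 1] with n hn
    obtain ⟨k, rfl⟩ : ∃ k, n = k + 1 := ⟨n - 1, by omega⟩
    simp only [Nat.sub_zero, Nat.add_sub_cancel, one_mul]
    rw [B13 k]
    calc ‖m ^ (k + 1) - W * m ^ k‖ ≤ ‖m ^ (k + 1)‖ + ‖W * m ^ k‖ := norm_sub_le _ _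
      _ ≤ ‖m ^ (k + 1)‖ + ‖W‖ * ‖m ^ k‖ := by linarith [norm_mul_le W (m ^ k)]
  have B15 : f * (c * (c * z)) = c * z := by
    rw [hf, add_mul, e6]
    have hXc : X * (c * (c * z)) = 0 := by
      rw [← mul_assoc X c, B2]
      rw [← Summable.tsum_mul_right (c*z) hS'sum]
      refine (tsum_congr fun k => ?_).trans tsum_zero
      rw [mul_assoc, mul_assoc, pow_succ m k, mul_assoc (m ^ k), e8, mul_zero, mul_zero, mul_zero]
    rw [hXc, add_zero]
  have B16 : (c * z) * f = f := by
    rw [hf, mul_add]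
    have hzz : (c * z) * z = z := by rw [mul_assoc]; exact h1
    have hX2 : (c * z) * X = X := by
      conv_lhs => rw [hX]
      rw [← Summable.tsum_mul_left (c * z) hXsum, hX]
      apply tsum_congr
      intro k
      rw [← mul_assoc, pow_succ' z, ← mul_assoc (c * z) z, mul_assoc c z z, h1, ← pow_succ']
    rw [hzz, hX2]
  refine ⟨f, B4, B9, ?_, B15, B16⟩
  simp only [B11]
  exact B14


section Weighted
theorem drazin_facts {A : Type*} [Ring A] (c e v : A)
    (hce : c * e = e * c) (hece : e * (c * e) = e) (heve : (e * v) * e = e) :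
    (c * (e * e) = e) ∧ (∀ n : ℕ, c ^ n * e = e * c ^ n) ∧
    (∀ k : ℕ, (c - c * (c * e)) ^ (k + 1) = c ^ (k + 1) - c ^ (k + 2) * e) ∧
    ((e * e) * (c * c) = c * e) ∧
    (∀ k : ℕ, (e * v) * c ^ (k + 1)
        = e * c ^ (k + 2) + (e * v) * ((c - c * (c * e)) ^ (k + 1))) := by
  have D3 : c * (e * e) = e := by rw [← mul_assoc, hce, mul_assoc]; exact hece
  have D10 : ∀ n : ℕ, c ^ n * e = e * c ^ n := by
    intro n; induction n with
    | zero => simp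
    | succ n ih => rw [pow_succ, mul_assoc, hce, ← mul_assoc, ih, mul_assoc, ← pow_succ]
  have ecc : e * (c * (c * e)) = c * e := by
    rw [← mul_assoc, ← hce, mul_assoc, hece]
  have Dρ : ∀ k : ℕ, (c - c * (c * e)) ^ (k + 1) = c ^ (k + 1) - c ^ (k + 2) * e := by
    intro k; induction k with
    | zero =>
      show (c - c * (c * e)) ^ 1 = c ^ 1 - c ^ 2 * e
      rw [pow_one, pow_one, pow_two, mul_assoc]
    | succ k ih =>
      show (c - c * (c * e)) ^ (k + 2) = c ^ (k + 2) - c ^ (k + 3) * e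
      rw [pow_succ, ih]
      rw [sub_mul, mul_sub, mul_sub]
      have t1 : c ^ (k + 1) * c = c ^ (k + 2) := by rw [← pow_succ]
      have t2 : c ^ (k + 1) * (c * (c * e)) = c ^ (k + 3) * e := by
        rw [← mul_assoc, ← pow_succ, ← mul_assoc, ← pow_succ]
      have t3 : (c ^ (k + 2) * e) * c = c ^ (k + 3) * e := by
        rw [mul_assoc, ← hce, ← mul_assoc, ← pow_succ]
      have t4 : (c ^ (k + 2) * e) * (c * (c * e)) = c ^ (k + 3) * e := by
        rw [mul_assoc, ecc, ← mul_assoc, ← pow_succ]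
      rw [t1, t2, t3, t4]
      abel
  have D11 : (e * e) * (c * c) = c * e := by
    rw [mul_assoc, ← mul_assoc e c c, ← hce, mul_assoc c e c, ← hce, ecc]
  have Dev : ∀ k : ℕ, (e * v) * c ^ (k + 1)
      = e * c ^ (k + 2) + (e * v) * ((c - c * (c * e)) ^ (k + 1)) := by
    intro k
    rw [Dρ k, mul_sub]
    have hv : (e * v) * (c ^ (k + 2) * e) = e * c ^ (k + 2) := by
      rw [D10, ← mul_assoc, heve]
    rw [hv]
    abel
  exact ⟨D3, D10, Dρ, D11, Dev⟩

variable {A : Type*} [NormedRing A] [StarRing A] [CompleteSpace A]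

theorem moreover_part (w a d u : A)
    (hd : IsWGDrazinInv w a d) (hu : Is13wInv w d u) :
    IsWCoreEPInv w a ((d * w) ^ 2 * u) := by
  obtain ⟨hd1, hd2, hd3⟩ := hd
  obtain ⟨hu1, hu2⟩ := hu
  simp only [mul_assoc] at hd1 hd2 hu1 hu2
  have hce : (w * a) * (w * d) = (w * d) * (w * a) := by
    simp only [mul_assoc]; rw [hd1]
  have hece : (w * d) * ((w * a) * (w * d)) = w * d := by
    simp only [mul_assoc]; rw [hd2]
  have heve : ((w * d) * (w * u)) * (w * d) = w * d := by
    simp only [mul_assoc]; rw [← hu1]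
  obtain ⟨D3, D10, Dρ, D11, Dev⟩ := drazin_facts (w * a) (w * d) (w * u) hce hece heve
  have hy3 : NegligR (fun n => ‖((a - a * w * d * w * a) * w) ^ n‖) :=
    negligR_of_tendsto (fun n => norm_nonneg _) hd3
  have hρw : (w * a) - (w * a) * ((w * a) * (w * d)) = w * (a - a * w * d * w * a) := by
    rw [mul_sub]
    congr 1
    simp only [mul_assoc]
    rw [hd1]
  have hρ : NegligR (fun n => ‖((w * a) - (w * a) * ((w * a) * (w * d))) ^ n‖) := by
    apply NegligR.mono (hy3.const_shift (C := ‖w‖ * ‖a - a * w * d * w * a‖) (by positivity) 1)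
    filter_upwards [eventually_ge_atTop 1] with n hn
    obtain ⟨k, rfl⟩ : ∃ k, n = k + 1 := ⟨n - 1, by omega⟩
    simp only [Nat.add_sub_cancel]
    rw [hρw, aux_pow w (a - a * w * d * w * a) k]
    calc ‖w * (((a - a * w * d * w * a) * w) ^ k * (a - a * w * d * w * a))‖
        ≤ ‖w‖ * (‖((a - a * w * d * w * a) * w) ^ k‖ * ‖a - a * w * d * w * a‖) :=
          le_trans (norm_mul_le _ _)
            (mul_le_mul_of_nonneg_left (norm_mul_le _ _) (norm_nonneg _))
      _ = ‖w‖ * ‖a - a * w * d * w * a‖ * ‖((a - a * w * d * w * a) * w) ^ k‖ := by ring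
  have k1 : (w * a) * ((w * d) * ((w * d) * (w * u))) = (w * d) * (w * u) := by
    calc (w * a) * ((w * d) * ((w * d) * (w * u)))
        = ((w * a) * ((w * d) * (w * d))) * (w * u) := by simp only [mul_assoc]
      _ = (w * d) * (w * u) := by rw [D3]
  refine ⟨?_, ?_, ?_⟩
  · -- a * (w * ((d*w)^2*u))^2 = (d*w)^2*u
    have wx : w * ((d * w) ^ 2 * u) = (w * d) * ((w * d) * (w * u)) := by
      rw [pow_two]; simp only [mul_assoc]
    have k0 : ((w * d) * (w * u)) * ((w * d) * ((w * d) * (w * u)))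
        = (w * d) * ((w * d) * (w * u)) := by
      rw [← mul_assoc, heve]
    have K1 : ((w * d) * ((w * d) * (w * u))) * ((w * d) * ((w * d) * (w * u)))
        = (w * d) * ((w * d) * ((w * d) * (w * u))) := by
      rw [mul_assoc, k0]
    rw [pow_two, wx]
    rw [K1, ← mul_assoc a, hd1, mul_assoc, k1]
    rw [pow_two]; simp only [mul_assoc]
  · -- star condition
    have k1' : w * (a * (w * (d * (w * (d * (w * u)))))) = w * (d * (w * u)) := by
      simpa only [mul_assoc] using k1
    have key2 : w * a * w * ((d * w) ^ 2 * u) = w * (d * (w * u)) := by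
      rw [pow_two]; simp only [mul_assoc]; exact k1'
    rw [key2]; exact hu2
  · -- limit condition
    apply negligR_tendsto (fun n => norm_nonneg _)
    have hb1 : NegligR (fun n => (‖a‖ * ‖w‖)
        * ‖((w * a) - (w * a) * ((w * a) * (w * d))) ^ (n - 1)‖) :=
      hρ.const_shift (by positivity) 1
    have hb2 : NegligR (fun n => (‖d * ((w * d) * (w * u))‖ * ‖w‖)
        * ‖((w * a) - (w * a) * ((w * a) * (w * d))) ^ (n + 1)‖) :=
      hρ.shift_up (by positivity) 1
    apply (hb1.add hb2).mono
    filter_upwards [eventually_ge_atTop 2] with n hn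
    obtain ⟨k, rfl⟩ : ∃ k, n = k + 2 := ⟨n - 2, by omega⟩
    rw [show k + 2 - 1 = k + 1 from by omega]
    have dec : d * ((w * d) * (w * a)) = a * ((w * d) * (w * d)) := by
      rw [← hce, ← mul_assoc, ← hd1, mul_assoc]
    have dE : d * ((w * d) * (w * a) ^ (k + 4)) = a * ((w * a) ^ (k + 2) * (w * d)) := by
      calc d * ((w * d) * (w * a) ^ (k + 4))
          = d * ((w * d) * ((w * a) * (w * a) ^ (k + 3))) := by rw [pow_succ']
        _ = (d * ((w * d) * (w * a))) * (w * a) ^ (k + 3) := by simp only [mul_assoc]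
        _ = (a * ((w * d) * (w * d))) * (w * a) ^ (k + 3) := by rw [dec]
        _ = a * (((w * d) * (w * d)) * (((w * a) * (w * a)) * (w * a) ^ (k + 1))) := by
            rw [show (w * a) ^ (k + 3) = ((w * a) * (w * a)) * (w * a) ^ (k + 1) from by
              rw [pow_succ', pow_succ']; simp only [mul_assoc]]
            simp only [mul_assoc]
        _ = a * ((((w * d) * (w * d)) * ((w * a) * (w * a))) * (w * a) ^ (k + 1)) := by
            rw [← mul_assoc ((w * d) * (w * d))]
        _ = a * (((w * a) * (w * d)) * (w * a) ^ (k + 1)) := by rw [D11]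
        _ = a * ((w * a) * ((w * a) ^ (k + 1) * (w * d))) := by
            rw [mul_assoc, ← D10]
        _ = a * ((w * a) ^ (k + 2) * (w * d)) := by
            rw [← mul_assoc (w * a), ← pow_succ']
    have pA : (a * w) ^ (k + 2) = a * ((w * a) ^ (k + 1) * w) := aux_pow a w (k + 1)
    have pB : ((d * w) ^ 2 * u) * w * (a * w) ^ (k + 3)
        = (d * ((w * d) * (w * u))) * ((w * a) ^ (k + 3) * w) := by
      rw [mul_assoc ((d * w) ^ 2 * u) w, aux_pow_swap a w (k + 3)]
      congr 1
      rw [pow_two]; simp only [mul_assoc]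
    have pC : (d * ((w * d) * (w * u))) * (w * a) ^ (k + 3)
        = a * ((w * a) ^ (k + 2) * (w * d))
          + (d * ((w * d) * (w * u)))
            * (((w * a) - (w * a) * ((w * a) * (w * d))) ^ (k + 3)) := by
      calc (d * ((w * d) * (w * u))) * (w * a) ^ (k + 3)
          = d * (((w * d) * (w * u)) * (w * a) ^ (k + 3)) := by rw [mul_assoc]
        _ = d * ((w * d) * (w * a) ^ (k + 4)
              + ((w * d) * (w * u)) * (((w * a) - (w * a) * ((w * a) * (w * d))) ^ (k + 3))) := by
            rw [Dev (k + 2)]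
        _ = d * ((w * d) * (w * a) ^ (k + 4))
              + d * (((w * d) * (w * u)) * (((w * a) - (w * a) * ((w * a) * (w * d))) ^ (k + 3))) := by
            rw [mul_add]
        _ = a * ((w * a) ^ (k + 2) * (w * d))
              + (d * ((w * d) * (w * u)))
                * (((w * a) - (w * a) * ((w * a) * (w * d))) ^ (k + 3)) := by
            rw [dE, ← mul_assoc d]
    have ID : (a * w) ^ (k + 2) - ((d * w) ^ 2 * u) * w * (a * w) ^ (k + 3)
        = a * (((w * a) - (w * a) * ((w * a) * (w * d))) ^ (k + 1) * w)
          - (d * ((w * d) * (w * u)))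
            * ((((w * a) - (w * a) * ((w * a) * (w * d))) ^ (k + 3)) * w) := by
      rw [pA, pB, ← mul_assoc (d * ((w * d) * (w * u))), pC, Dρ k]
      rw [add_mul, sub_mul ((w * a) ^ (k + 1)), mul_sub a,
        mul_assoc (d * ((w * d) * (w * u))), mul_assoc a ((w * a) ^ (k + 2) * (w * d)) w]
      abel
    rw [ID]
    calc ‖a * (((w * a) - (w * a) * ((w * a) * (w * d))) ^ (k + 1) * w)
          - (d * ((w * d) * (w * u)))
            * ((((w * a) - (w * a) * ((w * a) * (w * d))) ^ (k + 3)) * w)‖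
        ≤ ‖a * (((w * a) - (w * a) * ((w * a) * (w * d))) ^ (k + 1) * w)‖
          + ‖(d * ((w * d) * (w * u)))
            * ((((w * a) - (w * a) * ((w * a) * (w * d))) ^ (k + 3)) * w)‖ := norm_sub_le _ _
      _ ≤ ‖a‖ * (‖((w * a) - (w * a) * ((w * a) * (w * d))) ^ (k + 1)‖ * ‖w‖)
          + ‖d * ((w * d) * (w * u))‖
            * (‖((w * a) - (w * a) * ((w * a) * (w * d))) ^ (k + 3)‖ * ‖w‖) := by
          gcongr <;> exact le_trans (norm_mul_le _ _)
            (mul_le_mul_of_nonneg_left (norm_mul_le _ _) (norm_nonneg _))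
      _ = (‖a‖ * ‖w‖) * ‖((w * a) - (w * a) * ((w * a) * (w * d))) ^ (k + 1)‖
          + (‖d * ((w * d) * (w * u))‖ * ‖w‖)
            * ‖((w * a) - (w * a) * ((w * a) * (w * d))) ^ (k + 3)‖ := by ring

theorem forward_part (w a x : A) (hx : IsWCoreEPInv w a x) :
    ∃ d, IsWGDrazinInv w a d ∧ ∃ u, Is13wInv w d u := by
  obtain ⟨hx1, hx2, hx3⟩ := hx
  have hc1 : (w * a) * ((w * x) * (w * x)) = w * x := by
    have h := congrArg (fun y => w * y) hx1
    simpa only [pow_two, mul_assoc] using h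
  have hQ : NegligR (fun n => ‖(a * w) ^ n - x * w * (a * w) ^ (n + 1)‖) :=
    negligR_of_tendsto (fun n => norm_nonneg _) hx3
  have hq : NegligR (fun n => ‖(w * a) ^ n - (w * x) * (w * a) ^ (n + 1)‖) := by
    apply NegligR.mono (hQ.const_shift (C := ‖w‖ * ‖a‖) (by positivity) 1)
    filter_upwards [eventually_ge_atTop 1] with n hn
    obtain ⟨k, rfl⟩ : ∃ k, n = k + 1 := ⟨n - 1, by omega⟩
    simp only [Nat.add_sub_cancel]
    have id1 : (w * a) ^ (k + 1) - (w * x) * (w * a) ^ (k + 2)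
        = w * (((a * w) ^ k - x * w * (a * w) ^ (k + 1)) * a) := by
      rw [aux_pow w a k, aux_pow w a (k + 1), sub_mul, mul_sub]
      congr 1
      simp only [mul_assoc]
    rw [id1]
    calc ‖w * (((a * w) ^ k - x * w * (a * w) ^ (k + 1)) * a)‖
        ≤ ‖w‖ * (‖(a * w) ^ k - x * w * (a * w) ^ (k + 1)‖ * ‖a‖) :=
          le_trans (norm_mul_le _ _)
            (mul_le_mul_of_nonneg_left (norm_mul_le _ _) (norm_nonneg _))
      _ = ‖w‖ * ‖a‖ * ‖(a * w) ^ k - x * w * (a * w) ^ (k + 1)‖ := by ring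
  obtain ⟨f, O1, O2, O3, O4, O5⟩ := core_construction (w * a) (w * x) hc1 hq
  have hwd : w * (a * (f * f)) = f := by
    have h' : ((w * a) * f) * f = f := by rw [O1, mul_assoc]; exact O2
    calc w * (a * (f * f)) = ((w * a) * f) * f := by simp only [mul_assoc]
      _ = f := h'
  have hffc : f * (f * (w * a)) = f := by
    rw [← O1]; exact O2
  have O5N : w * (a * (w * (x * f))) = f := by
    simpa only [mul_assoc] using O5
  refine ⟨a * (f * f), ⟨?_, ?_, ?_⟩, a * (w * (a * (w * x))), ?_, ?_⟩
  · -- a * w * d = d * w * a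
    show a * w * (a * (f * f)) = a * (f * f) * w * a
    simp only [mul_assoc]
    rw [hwd, hffc]
  · -- d * w * a * w * d = d
    show a * (f * f) * w * a * w * (a * (f * f)) = a * (f * f)
    simp only [mul_assoc]
    rw [hwd, ← mul_assoc w a f, O2]
  · -- quasinilpotence
    show IsWQuasinilpotent w (a - a * w * (a * (f * f)) * w * a)
    have hy : a * w * (a * (f * f)) * w * a = a * (f * (w * a)) := by
      simp only [mul_assoc]
      rw [hffc, ← mul_assoc w a f, O1]
    apply negligR_tendsto (fun n => norm_nonneg _)
    apply NegligR.mono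
      (O3.const_shift (C := ‖a - a * (f * (w * a))‖ * ‖w‖) (by positivity) 1)
    filter_upwards [eventually_ge_atTop 1] with n hn
    obtain ⟨k, rfl⟩ : ∃ k, n = k + 1 := ⟨n - 1, by omega⟩
    simp only [Nat.add_sub_cancel]
    rw [hy, aux_pow (a - a * (f * (w * a))) w k]
    have hwy : w * (a - a * (f * (w * a))) = (w * a) - (w * a) * ((w * a) * f) := by
      rw [mul_sub]
      congr 1
      rw [O1]
      simp only [mul_assoc]
    rw [hwy]
    calc ‖(a - a * (f * (w * a))) * (((w * a) - (w * a) * ((w * a) * f)) ^ k * w)‖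
        ≤ ‖a - a * (f * (w * a))‖ * (‖((w * a) - (w * a) * ((w * a) * f)) ^ k‖ * ‖w‖) :=
          le_trans (norm_mul_le _ _)
            (mul_le_mul_of_nonneg_left (norm_mul_le _ _) (norm_nonneg _))
      _ = ‖a - a * (f * (w * a))‖ * ‖w‖ * ‖((w * a) - (w * a) * ((w * a) * f)) ^ k‖ := by
          ring
  · -- d = d*w*u*w*d
    show a * (f * f) = a * (f * f) * w * (a * (w * (a * (w * x)))) * w * (a * (f * f))
    symm
    simp only [mul_assoc]
    rw [hwd, O5N, ← mul_assoc w a f, O2]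
  · -- star condition
    show star (w * (a * (f * f)) * w * (a * (w * (a * (w * x)))))
        = w * (a * (f * f)) * w * (a * (w * (a * (w * x))))
    have hwu : w * (a * (w * (a * (w * x)))) = (w * a) * ((w * a) * (w * x)) := by
      simp only [mul_assoc]
    have hkey : w * (a * (f * f)) * w * (a * (w * (a * (w * x)))) = w * (a * (w * x)) := by
      rw [mul_assoc (w * (a * (f * f))) w, hwd, hwu, O4]
      simp only [mul_assoc]
    rw [hkey]
    simpa only [mul_assoc] using hx2


end Weighted
end WCEP

/-- Theorem 4.4. -/
theorem isWCoreEPInv_exists_iff_gDrazin_13w (w a : A) :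
    ((∃ x, IsWCoreEPInv w a x) ↔
      ∃ d, IsWGDrazinInv w a d ∧ ∃ u, Is13wInv w d u) ∧
    (∀ d u : A, IsWGDrazinInv w a d → Is13wInv w d u →
      IsWCoreEPInv w a ((d * w) ^ 2 * u)) := by
  constructor
  · constructor
    · rintro ⟨x, hx⟩
      exact WCEP.forward_part w a x hx
    · rintro ⟨d, hd, u, hu⟩
      exact ⟨_, WCEP.moreover_part w a d u hd hu⟩
  · intro d u hd hu
    exact WCEP.moreover_part w a d u hd hu
end

section
/- Let a ∈ 𝒜 have a generalized w-weighted core-EP inverse a^{⊛d,w}, let e ∈ 𝒜 be a g-Drazin inverse of wa, and let b ∈ 𝒜. The following are equivalent: (1) (1 − wawa^{⊛d,w})b = 0; (2) (1 − wa^{⊛d,w}wa)b = 0; (3) (1 − (wa)e)b = 0. -/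
open Filter

variable {A : Type*} [NormedRing A] [NormedAlgebra ℂ A] [StarRing A] [StarModule ℂ A]
  [CompleteSpace A]


private lemma aux_tendsto {v : ℕ → ℝ} (hv0 : ∀ n, 0 ≤ v n)
    (hv : Tendsto (fun n : ℕ => (v n) ^ (1 / (n : ℝ))) atTop (nhds 0))
    {c : ℝ} (hc : 0 ≤ c) (k : ℕ) :
    Tendsto (fun n : ℕ => v (n + k) * c ^ n) atTop (nhds 0) := by
  set ε : ℝ := min 1 (1 / (2 * (c + 1))) with hεdef
  have hεpos : 0 < ε := lt_min one_pos (by positivity)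
  have hεle1 : ε ≤ 1 := min_le_left _ _
  have hεc : ε * c ≤ 1 / 2 := by
    have h1 : ε ≤ 1 / (2 * (c + 1)) := min_le_right _ _
    have h2 : ε * c ≤ (1 / (2 * (c + 1))) * c := mul_le_mul_of_nonneg_right h1 hc
    have h3 : (1 / (2 * (c + 1))) * c ≤ 1 / 2 := by
      rw [div_mul_eq_mul_div, one_mul, div_le_div_iff₀ (by positivity) (by norm_num)]
      nlinarith
    linarith
  have hev : ∀ᶠ n : ℕ in atTop, v n ^ (1 / (n : ℝ)) < ε :=
    hv.eventually (gt_mem_nhds hεpos)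
  obtain ⟨N, hN⟩ := eventually_atTop.mp hev
  have key : ∀ n, N + 1 ≤ n → v (n + k) * c ^ n ≤ (1 / 2 : ℝ) ^ n := by
    intro n hn
    have hnk : N ≤ n + k := by omega
    have hnk0 : (n + k) ≠ 0 := by omega
    have h2 : v (n + k) ^ (1 / ((n + k : ℕ) : ℝ)) < ε := hN _ hnk
    have h3 : v (n + k) ≤ ε ^ (n + k) := by
      have := pow_le_pow_left₀ (Real.rpow_nonneg (hv0 _) _) h2.le (n + k)
      rwa [one_div, Real.rpow_inv_natCast_pow (hv0 _) hnk0] at this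
    have h4 : ε ^ (n + k) ≤ ε ^ n := pow_le_pow_of_le_one hεpos.le hεle1 (Nat.le_add_right n k)
    calc v (n + k) * c ^ n ≤ ε ^ n * c ^ n :=
          mul_le_mul_of_nonneg_right (h3.trans h4) (pow_nonneg hc n)
      _ = (ε * c) ^ n := (mul_pow ε c n).symm
      _ ≤ (1 / 2 : ℝ) ^ n := pow_le_pow_left₀ (by positivity) hεc n
  refine squeeze_zero' ?_ ?_
    (tendsto_pow_atTop_nhds_zero_of_lt_one (r := (1/2:ℝ)) (by norm_num) (by norm_num))
  · exact Eventually.of_forall fun n => mul_nonneg (hv0 _) (pow_nonneg hc n)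
  · exact eventually_atTop.mpr ⟨N + 1, key⟩

private lemma aux_vanish {R : Type*} [NormedRing R] {d : R} {v : ℕ → ℝ} (hv0 : ∀ n, 0 ≤ v n)
    (hv : Tendsto (fun n : ℕ => (v n) ^ (1 / (n : ℝ))) atTop (nhds 0))
    {c C : ℝ} (hc : 0 ≤ c) (k : ℕ)
    (hb : ∀ n : ℕ, ‖d‖ ≤ C * (v (n + k) * c ^ n)) : d = 0 := by
  have h0 : Tendsto (fun n : ℕ => C * (v (n + k) * c ^ n)) atTop (nhds 0) := by
    simpa using (aux_tendsto hv0 hv hc k).const_mul C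
  have hd : ‖d‖ ≤ 0 := ge_of_tendsto' h0 hb
  simpa using le_antisymm hd (norm_nonneg d)

section
variable {R : Type*} [NormedRing R]

private lemma main_aux (s y e b : R) (u : ℕ → R) (C0 : ℝ)
    (h1 : s * (y * y) = y)
    (hu : Tendsto (fun n : ℕ => ‖u n‖ ^ (1 / (n : ℝ))) atTop (nhds 0))
    (ht : ∀ n : ℕ, ‖s ^ (n + 1) - y * s ^ (n + 2)‖ ≤ C0 * ‖u n‖)
    (hcomm : s * e = e * s)
    (hese : e * s * e = e)
    (hq : Tendsto (fun n : ℕ => ‖(s - s ^ 2 * e) ^ n‖ ^ (1 / (n : ℝ))) atTop (nhds 0)) :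
    ((1 - s * y) * b = 0 ↔ (1 - y * s) * b = 0) ∧
    ((1 - y * s) * b = 0 ↔ (1 - s * e) * b = 0) := by
  have hc' : Commute s e := hcomm
  have hypow : ∀ n : ℕ, s ^ n * y ^ (n + 1) = y := by
    intro n
    induction n with
    | zero => simp
    | succ n ih =>
      calc s ^ (n + 1) * y ^ (n + 2)
          = s * ((s ^ n * y ^ (n + 1)) * y) := by
            rw [pow_succ' s n, pow_succ y (n + 1), mul_assoc, ← mul_assoc (s ^ n)]
        _ = s * (y * y) := by rw [ih]
        _ = y := h1
  -- (s*e) is idempotent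
  have hsee : (s * e) * (s * e) = s * e := by
    calc (s * e) * (s * e) = s * ((e * s) * e) := by rw [mul_assoc, ← mul_assoc e s e]
      _ = s * e := by rw [hese]
  have hsen : ∀ n : ℕ, (s * e) ^ (n + 1) = s * e := by
    intro n
    induction n with
    | zero => simp
    | succ n ih => rw [pow_succ, ih, hsee]
  have hse : ∀ n : ℕ, s ^ (n + 1) * e ^ (n + 1) = s * e := by
    intro n
    rw [← Commute.mul_pow hc']
    exact hsen n
  -- s*y = y*s*(s*y)  (q p = p)
  have hd1 : s * y - y * s * (s * y) = 0 := by
    refine aux_vanish (v := fun n => ‖u n‖) (fun n => norm_nonneg _) hu (norm_nonneg y) 0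
      (C := C0 * ‖y‖) ?_
    intro n
    have hid : s * y - y * s * (s * y) = (s ^ (n + 1) - y * s ^ (n + 2)) * y ^ (n + 1) := by
      rw [sub_mul]
      congr 1
      · rw [pow_succ' s n, mul_assoc, hypow n]
      · symm
        calc y * s ^ (n + 2) * y ^ (n + 1)
            = y * s * (s * (s ^ n * y ^ (n + 1))) := by
              rw [pow_succ' s (n + 1), pow_succ' s n, mul_assoc y, mul_assoc s, mul_assoc s,
                ← mul_assoc y s]
          _ = y * s * (s * y) := by rw [hypow n]
    rw [hid]
    calc ‖(s ^ (n + 1) - y * s ^ (n + 2)) * y ^ (n + 1)‖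
        ≤ ‖s ^ (n + 1) - y * s ^ (n + 2)‖ * ‖y ^ (n + 1)‖ := norm_mul_le _ _
      _ ≤ (C0 * ‖u n‖) * ‖y‖ ^ (n + 1) :=
          mul_le_mul (ht n) (norm_pow_le' y n.succ_pos) (norm_nonneg _)
            ((norm_nonneg _).trans (ht n))
      _ = (C0 * ‖y‖) * (‖u (n + 0)‖ * ‖y‖ ^ n) := by rw [Nat.add_zero]; ring
  -- s*e = y*s*(s*e)   (q r = r)
  have hd2 : s * e - y * s * (s * e) = 0 := by
    refine aux_vanish (v := fun n => ‖u n‖) (fun n => norm_nonneg _) hu (norm_nonneg e) 1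
      (C := C0 * (‖e‖ * ‖e‖)) ?_
    intro n
    have hse2 : s ^ (n + 2) * e ^ (n + 2) = s * e := hse (n + 1)
    have h2 : y * s ^ (n + 3) * e ^ (n + 2) = y * s * (s * e) := by
      calc y * s ^ (n + 3) * e ^ (n + 2)
          = y * s * (s ^ (n + 2) * e ^ (n + 2)) := by
            rw [pow_succ' s (n + 2), ← mul_assoc y s, mul_assoc (y * s)]
        _ = y * s * (s * e) := by rw [hse2]
    have hid : s * e - y * s * (s * e) = (s ^ (n + 2) - y * s ^ (n + 3)) * e ^ (n + 2) := by
      rw [sub_mul, hse2, h2]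
    rw [hid]
    calc ‖(s ^ (n + 2) - y * s ^ (n + 3)) * e ^ (n + 2)‖
        ≤ ‖s ^ (n + 2) - y * s ^ (n + 3)‖ * ‖e ^ (n + 2)‖ := norm_mul_le _ _
      _ ≤ (C0 * ‖u (n + 1)‖) * ‖e‖ ^ (n + 2) :=
          mul_le_mul (ht (n + 1)) (norm_pow_le' e (by omega)) (norm_nonneg _)
            ((norm_nonneg _).trans (ht (n + 1)))
      _ = (C0 * (‖e‖ * ‖e‖)) * (‖u (n + 1)‖ * ‖e‖ ^ n) := by ring
  -- powers of the quasinilpotent part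
  have hese2 : e * (s ^ 2 * e) = s * e := by
    rw [pow_two, mul_assoc s s e, ← mul_assoc e s (s * e), ← hcomm, hsee]
  have hfpow : ∀ n : ℕ, (s - s ^ 2 * e) ^ (n + 1) = s ^ (n + 1) - s ^ (n + 2) * e := by
    intro n
    induction n with
    | zero => simp
    | succ n ih =>
      have e1 : s ^ (n + 1) * s = s ^ (n + 2) := (pow_succ s (n + 1)).symm
      have e2 : s ^ (n + 1) * (s ^ 2 * e) = s ^ (n + 3) * e := by
        rw [← mul_assoc, ← pow_add]
      have e3 : (s ^ (n + 2) * e) * s = s ^ (n + 3) * e := by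
        rw [mul_assoc, ← hcomm, ← mul_assoc, ← pow_succ]
      have e4 : (s ^ (n + 2) * e) * (s ^ 2 * e) = s ^ (n + 3) * e := by
        rw [mul_assoc, hese2, ← mul_assoc, ← pow_succ]
      calc (s - s ^ 2 * e) ^ (n + 2)
          = (s ^ (n + 1) - s ^ (n + 2) * e) * (s - s ^ 2 * e) := by rw [pow_succ, ih]
        _ = s ^ (n + 1) * s - s ^ (n + 1) * (s ^ 2 * e)
            - ((s ^ (n + 2) * e) * s - (s ^ (n + 2) * e) * (s ^ 2 * e)) := by
            rw [sub_mul, mul_sub, mul_sub]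
        _ = s ^ (n + 2) - s ^ (n + 3) * e := by rw [e1, e2, e3, e4]; abel
  -- y*s = s*e*(y*s)   (r q = q)
  have hd3 : y * s - s * e * (y * s) = 0 := by
    refine aux_vanish (v := fun n => ‖(s - s ^ 2 * e) ^ n‖) (fun n => norm_nonneg _) hq
      (norm_nonneg y) 1 (C := ‖y‖ * ‖y‖ * ‖s‖) ?_
    intro n
    have hys : y * s = s ^ (n + 1) * (y ^ (n + 2) * s) := by
      rw [← mul_assoc, hypow (n + 1)]
    have h2 : s * e * (y * s) = (s ^ (n + 2) * e) * (y ^ (n + 2) * s) := by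
      calc s * e * (y * s)
          = s * e * (s ^ (n + 1) * (y ^ (n + 2) * s)) := by rw [hys]
        _ = (s * e * s ^ (n + 1)) * (y ^ (n + 2) * s) :=
            (mul_assoc (s * e) (s ^ (n + 1)) _).symm
        _ = (s * (s ^ (n + 1) * e)) * (y ^ (n + 2) * s) := by
            congr 1
            rw [mul_assoc, ← (hc'.pow_left (n + 1)).eq]
        _ = (s ^ (n + 2) * e) * (y ^ (n + 2) * s) := by
            congr 1
            rw [← mul_assoc, ← pow_succ']
    have hid : y * s - s * e * (y * s) = (s - s ^ 2 * e) ^ (n + 1) * (y ^ (n + 2) * s) := by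
      rw [hfpow n, sub_mul, ← hys, ← h2]
    rw [hid]
    calc ‖(s - s ^ 2 * e) ^ (n + 1) * (y ^ (n + 2) * s)‖
        ≤ ‖(s - s ^ 2 * e) ^ (n + 1)‖ * (‖y ^ (n + 2)‖ * ‖s‖) :=
          (norm_mul_le _ _).trans (by
            gcongr
            exact norm_mul_le _ _)
      _ ≤ ‖(s - s ^ 2 * e) ^ (n + 1)‖ * (‖y‖ ^ (n + 2) * ‖s‖) := by
          gcongr
          exact norm_pow_le' y (by norm_num)
      _ = (‖y‖ * ‖y‖ * ‖s‖) * (‖(s - s ^ 2 * e) ^ (n + 1)‖ * ‖y‖ ^ n) := by ring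
  -- pure algebra: (s*y)*(y*s) = y*s   (p q = q)
  have hpq : (s * y) * (y * s) = y * s := by
    rw [mul_assoc s y, ← mul_assoc y y s, ← mul_assoc s (y * y) s, h1]
  have hqp : y * s * (s * y) = s * y := (sub_eq_zero.mp hd1).symm
  have hqr : y * s * (s * e) = s * e := (sub_eq_zero.mp hd2).symm
  have hrq : s * e * (y * s) = y * s := (sub_eq_zero.mp hd3).symm
  have ep : ∀ p : R, ((1 - p) * b = 0) ↔ (p * b = b) := by
    intro p
    rw [sub_mul, one_mul, sub_eq_zero]
    exact eq_comm
  constructor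
  · rw [ep, ep]
    constructor
    · intro h
      calc y * s * b = y * s * (s * y * b) := by rw [h]
        _ = (y * s * (s * y)) * b := (mul_assoc (y * s) (s * y) b).symm
        _ = s * y * b := by rw [hqp]
        _ = b := h
    · intro h
      calc s * y * b = s * y * (y * s * b) := by rw [h]
        _ = ((s * y) * (y * s)) * b := (mul_assoc (s * y) (y * s) b).symm
        _ = y * s * b := by rw [hpq]
        _ = b := h
  · rw [ep, ep]
    constructor
    · intro h
      calc s * e * b = s * e * (y * s * b) := by rw [h]
        _ = (s * e * (y * s)) * b := (mul_assoc (s * e) (y * s) b).symm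
        _ = y * s * b := by rw [hrq]
        _ = b := h
    · intro h
      calc y * s * b = y * s * (s * e * b) := by rw [h]
        _ = (y * s * (s * e)) * b := (mul_assoc (y * s) (s * e) b).symm
        _ = s * e * b := by rw [hqr]
        _ = b := h

end

/-- Lemma 4.6. -/
theorem annihilator_equiv (w a x e b : A)
    (hx : IsWCoreEPInv w a x) (he : IsGDrazinInv (w * a) e) :
    ((1 - w * a * w * x) * b = 0 ↔ (1 - w * x * w * a) * b = 0) ∧
    ((1 - w * x * w * a) * b = 0 ↔ (1 - w * a * e) * b = 0) := by
  obtain ⟨hx1, -, hx3⟩ := hx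
  obtain ⟨he1, he2, he3⟩ := he
  have hpow : ∀ n : ℕ, w * (a * w) ^ n = (w * a) ^ n * w := by
    intro n
    induction n with
    | zero => simp
    | succ n ih =>
      calc w * (a * w) ^ (n + 1) = (w * (a * w) ^ n) * (a * w) := by
            rw [pow_succ, ← mul_assoc]
        _ = (w * a) ^ n * (w * a * w) := by rw [ih, mul_assoc, ← mul_assoc w a w]
        _ = (w * a) ^ (n + 1) * w := by rw [← mul_assoc, ← pow_succ]
  have hA : ∀ n : ℕ, w * ((a * w) ^ n * a) = (w * a) ^ (n + 1) := by
    intro n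
    rw [← mul_assoc, hpow n, mul_assoc, ← pow_succ]
  have h1 : (w * a) * ((w * x) * (w * x)) = w * x := by
    have h := congrArg (fun z => w * z) hx1
    simp only [pow_two] at h
    calc (w * a) * ((w * x) * (w * x)) = w * (a * (w * x * (w * x))) := by
          simp only [mul_assoc]
      _ = w * x := h
  have hT : ∀ n : ℕ,
      (w * a) ^ (n + 1) - (w * x) * (w * a) ^ (n + 2)
        = w * (((a * w) ^ n - x * w * (a * w) ^ (n + 1)) * a) := by
    intro n
    have h2 : w * ((x * w * (a * w) ^ (n + 1)) * a) = (w * x) * (w * a) ^ (n + 2) := by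
      calc w * ((x * w * (a * w) ^ (n + 1)) * a)
          = w * (x * (w * ((a * w) ^ (n + 1) * a))) := by simp only [mul_assoc]
        _ = w * (x * (w * a) ^ (n + 2)) := by rw [hA (n + 1)]
        _ = (w * x) * (w * a) ^ (n + 2) := by rw [← mul_assoc]
    rw [sub_mul, mul_sub, hA n, h2]
  have ht : ∀ n : ℕ, ‖(w * a) ^ (n + 1) - (w * x) * (w * a) ^ (n + 2)‖
      ≤ (‖w‖ * ‖a‖) * ‖(a * w) ^ n - x * w * (a * w) ^ (n + 1)‖ := by
    intro n
    rw [hT n]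
    calc ‖w * (((a * w) ^ n - x * w * (a * w) ^ (n + 1)) * a)‖
        ≤ ‖w‖ * (‖(a * w) ^ n - x * w * (a * w) ^ (n + 1)‖ * ‖a‖) := by
          refine (norm_mul_le _ _).trans ?_
          gcongr
          exact norm_mul_le _ _
      _ = (‖w‖ * ‖a‖) * ‖(a * w) ^ n - x * w * (a * w) ^ (n + 1)‖ := by ring
  have main := main_aux (w * a) (w * x) e b
    (fun n => (a * w) ^ n - x * w * (a * w) ^ (n + 1)) (‖w‖ * ‖a‖)
    h1 hx3 ht he1 he2 he3
  simp only [mul_assoc] at main ⊢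
  exact main
end
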